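/- arXiv:2106.03967 — 4 statements merged into one kernel-verified Lean document; each statement's English description precedes it below -/
import Mathlib

section
/- Let f(r) = r(1+r^2)^{-1/4} and h(r) = (1+r^2)^{-α} with α > 0, and let p ≥ 2 be an integer. For all r > 0, the quantity -h''(r)/h(r) - (p-1) f''(r)/f(r) is strictly greater than (r^2/(1+r^2)^2) * [(p-1)/4 - (2α + 4α^2)]. -/
noncomputable def f (r : ℝ) : ℝ := r * (1 + r ^ 2) ^ (-(1 / 4 : ℝ))

noncomputable def h (α : ℝ) (r : ℝ) : ℝ := (1 + r ^ 2) ^ (-α)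

lemma Apos (r : ℝ) : (0:ℝ) < 1 + r ^ 2 := by positivity

lemma aux1 (r : ℝ) : HasDerivAt (fun x : ℝ => 1 + x ^ 2) (2 * r) r := by
  simpa using (hasDerivAt_pow 2 r).const_add 1

lemma rpowD (q : ℝ) (r : ℝ) :
    HasDerivAt (fun x : ℝ => (1 + x ^ 2) ^ q) (2 * r * q * (1 + r ^ 2) ^ (q - 1)) r :=
  (aux1 r).rpow_const (Or.inl (Apos r).ne')

lemma hd1 (α r : ℝ) : HasDerivAt (h α) (2 * r * (-α) * (1 + r ^ 2) ^ (-α - 1)) r :=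
  rpowD (-α) r

lemma hderiv1 (α : ℝ) : deriv (h α) = fun r => 2 * r * (-α) * (1 + r ^ 2) ^ (-α - 1) :=
  funext fun r => (hd1 α r).deriv

lemma hd2 (α r : ℝ) : HasDerivAt (deriv (h α))
    (2 * 1 * (-α) * (1 + r ^ 2) ^ (-α - 1) +
      2 * r * (-α) * (2 * r * (-α - 1) * (1 + r ^ 2) ^ (-α - 1 - 1))) r := by
  rw [hderiv1]
  exact (((hasDerivAt_id' r).const_mul 2).mul_const (-α)).mul (rpowD (-α - 1) r)

lemma fd1 (r : ℝ) : HasDerivAt f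
    (1 * (1 + r ^ 2) ^ (-(1 / 4 : ℝ)) +
      r * (2 * r * (-(1 / 4 : ℝ)) * (1 + r ^ 2) ^ (-(1 / 4 : ℝ) - 1))) r :=
  (hasDerivAt_id' r).mul (rpowD (-(1 / 4 : ℝ)) r)

lemma fderiv1 : deriv f = fun r => 1 * (1 + r ^ 2) ^ (-(1 / 4 : ℝ)) +
      r * (2 * r * (-(1 / 4 : ℝ)) * (1 + r ^ 2) ^ (-(1 / 4 : ℝ) - 1)) :=
  funext fun r => (fd1 r).deriv

lemma fd2 (r : ℝ) : HasDerivAt (deriv f)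
    (2 * r * (-(1 / 4 : ℝ)) * (1 + r ^ 2) ^ (-(1 / 4 : ℝ) - 1) +
      (1 * (2 * r * (-(1 / 4 : ℝ)) * (1 + r ^ 2) ^ (-(1 / 4 : ℝ) - 1)) +
        r * (2 * 1 * (-(1 / 4 : ℝ)) * (1 + r ^ 2) ^ (-(1 / 4 : ℝ) - 1) +
          2 * r * (-(1 / 4 : ℝ)) *
            (2 * r * (-(1 / 4 : ℝ) - 1) * (1 + r ^ 2) ^ (-(1 / 4 : ℝ) - 1 - 1))))) r := by
  rw [fderiv1]
  have hc : HasDerivAt (fun x : ℝ => 1 * (1 + x ^ 2) ^ (-(1 / 4 : ℝ)))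
      (1 * (2 * r * (-(1 / 4 : ℝ)) * (1 + r ^ 2) ^ (-(1 / 4 : ℝ) - 1))) r :=
    (rpowD (-(1 / 4 : ℝ)) r).const_mul 1
  have hi : HasDerivAt (fun x : ℝ => x * (2 * x * (-(1 / 4 : ℝ)) * (1 + x ^ 2) ^ (-(1 / 4 : ℝ) - 1)))
      (1 * (2 * r * (-(1 / 4 : ℝ)) * (1 + r ^ 2) ^ (-(1 / 4 : ℝ) - 1)) +
        r * (2 * 1 * (-(1 / 4 : ℝ)) * (1 + r ^ 2) ^ (-(1 / 4 : ℝ) - 1) +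
          2 * r * (-(1 / 4 : ℝ)) *
            (2 * r * (-(1 / 4 : ℝ) - 1) * (1 + r ^ 2) ^ (-(1 / 4 : ℝ) - 1 - 1)))) r :=
    (hasDerivAt_id' r).mul ((((hasDerivAt_id' r).const_mul 2).mul_const (-(1 / 4 : ℝ))).mul
      (rpowD (-(1 / 4 : ℝ) - 1) r))
  have := hc.add hi
  exact this.congr_deriv (by ring)

theorem stmt_3 (α : ℝ) (hα : 0 < α) (p : ℕ) (hp : 2 ≤ p) :
    ∀ r : ℝ, 0 < r →
      (r ^ 2 / (1 + r ^ 2) ^ 2) * (((p : ℝ) - 1) / 4 - (2 * α + 4 * α ^ 2)) <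
        -(deriv (deriv (h α)) r) / h α r - ((p : ℝ) - 1) * (deriv (deriv f) r) / f r := by
  intro r hr
  have hA : (0:ℝ) < 1 + r ^ 2 := Apos r
  have hAne : (1 + r ^ 2 : ℝ) ≠ 0 := hA.ne'
  rw [(hd2 α r).deriv, (fd2 r).deriv]
  have e1 : (1 + r ^ 2 : ℝ) ^ (-α - 1) = (1 + r ^ 2) ^ (-α) / (1 + r ^ 2) := by
    rw [Real.rpow_sub hA, Real.rpow_one]
  have e2 : (1 + r ^ 2 : ℝ) ^ (-α - 1 - 1) = (1 + r ^ 2) ^ (-α) / (1 + r ^ 2) ^ 2 := by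
    rw [show (-α - 1 - 1 : ℝ) = -α - (2:ℕ) from by push_cast; ring, Real.rpow_sub hA,
      Real.rpow_natCast]
  have e3 : (1 + r ^ 2 : ℝ) ^ (-(1/4 : ℝ) - 1) = (1 + r ^ 2) ^ (-(1/4 : ℝ)) / (1 + r ^ 2) := by
    rw [Real.rpow_sub hA, Real.rpow_one]
  have e4 : (1 + r ^ 2 : ℝ) ^ (-(1/4 : ℝ) - 1 - 1)
      = (1 + r ^ 2) ^ (-(1/4 : ℝ)) / (1 + r ^ 2) ^ 2 := by
    rw [show (-(1/4 : ℝ) - 1 - 1 : ℝ) = -(1/4 : ℝ) - (2:ℕ) from by push_cast; ring,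
      Real.rpow_sub hA, Real.rpow_natCast]
  set H : ℝ := (1 + r ^ 2) ^ (-α) with hH
  set F : ℝ := (1 + r ^ 2) ^ (-(1/4 : ℝ)) with hF
  have hHpos : 0 < H := Real.rpow_pos_of_pos hA _
  have hFpos : 0 < F := Real.rpow_pos_of_pos hA _
  rw [e1, e2, e3, e4]
  have hhα : h α r = H := rfl
  have hfr : f r = r * F := rfl
  rw [hhα, hfr]
  have key1 : -(2 * 1 * (-α) * (H / (1 + r ^ 2)) +
      2 * r * (-α) * (2 * r * (-α - 1) * (H / (1 + r ^ 2) ^ 2))) / H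
      = 2 * α / (1 + r ^ 2) - (4 * α ^ 2 + 4 * α) * r ^ 2 / (1 + r ^ 2) ^ 2 := by
    field_simp
    ring
  have key2 : ((p : ℝ) - 1) * (2 * r * (-(1/4 : ℝ)) * (F / (1 + r ^ 2)) +
      (1 * (2 * r * (-(1/4 : ℝ)) * (F / (1 + r ^ 2))) +
        r * (2 * 1 * (-(1/4 : ℝ)) * (F / (1 + r ^ 2)) +
          2 * r * (-(1/4 : ℝ)) * (2 * r * (-(1/4 : ℝ) - 1) * (F / (1 + r ^ 2) ^ 2))))) / (r * F)
      = ((p : ℝ) - 1) * (-(3/2) / (1 + r ^ 2) + (5/4) * r ^ 2 / (1 + r ^ 2) ^ 2) := by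
    field_simp
    ring
  rw [key1, key2]
  have key3 : (2 * α / (1 + r ^ 2) - (4 * α ^ 2 + 4 * α) * r ^ 2 / (1 + r ^ 2) ^ 2 -
      ((p : ℝ) - 1) * (-(3/2) / (1 + r ^ 2) + (5/4) * r ^ 2 / (1 + r ^ 2) ^ 2)) -
      r ^ 2 / (1 + r ^ 2) ^ 2 * (((p : ℝ) - 1) / 4 - (2 * α + 4 * α ^ 2))
      = (2 * α + (3/2) * ((p : ℝ) - 1)) / (1 + r ^ 2) ^ 2 := by
    field_simp
    ring
  have hp' : (2 : ℝ) ≤ (p : ℝ) := by exact_mod_cast hp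
  have hpos2 : 0 < (2 * α + (3/2) * ((p : ℝ) - 1)) / (1 + r ^ 2) ^ 2 :=
    div_pos (by nlinarith) (by positivity)
  linarith
end

section
/- Let f(r) = r(1+r^2)^{-1/4}, h(r) = (1+r^2)^{-α} with α > 0, and let p ≥ 2 be an integer. For all r > 0, the quantity -f''(r)/f(r) + ((p-2)/f(r)^2)(1 - f'(r)^2) - f'(r)h'(r)/(f(r)h(r)) is strictly positive. -/
lemma hasDerivAt_base (r : ℝ) : HasDerivAt (fun r : ℝ => 1 + r ^ 2) (2 * r) r := by
  simpa using ((hasDerivAt_pow 2 r).const_add 1)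

lemma hasDerivAt_f (r : ℝ) :
    HasDerivAt f ((1 + r ^ 2) ^ (-(5 / 4 : ℝ)) * (1 + r ^ 2 / 2)) r := by
  have hu : (0 : ℝ) < 1 + r ^ 2 := by positivity
  have h2 : HasDerivAt (fun r : ℝ => (1 + r ^ 2) ^ (-(1 / 4 : ℝ)))
      (2 * r * (-(1 / 4 : ℝ)) * (1 + r ^ 2) ^ (-(1 / 4 : ℝ) - 1)) r :=
    (hasDerivAt_base r).rpow_const (Or.inl hu.ne')
  have h3 := (hasDerivAt_id r).mul h2
  have key : (1 + r ^ 2) ^ (-(1 / 4 : ℝ)) = (1 + r ^ 2) ^ (-(5 / 4 : ℝ)) * (1 + r ^ 2) := by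
    rw [show (-(1 / 4 : ℝ)) = -(5 / 4 : ℝ) + 1 by norm_num, Real.rpow_add hu, Real.rpow_one]
  have hexp : (-(1 / 4 : ℝ) - 1) = -(5 / 4 : ℝ) := by norm_num
  refine h3.congr_deriv ?_
  simp only [id_eq]
  rw [hexp, key]
  ring

lemma deriv_f : deriv f = fun r : ℝ => (1 + r ^ 2) ^ (-(5 / 4 : ℝ)) * (1 + r ^ 2 / 2) :=
  funext fun r => (hasDerivAt_f r).deriv

lemma hasDerivAt_df (r : ℝ) :
    HasDerivAt (fun r : ℝ => (1 + r ^ 2) ^ (-(5 / 4 : ℝ)) * (1 + r ^ 2 / 2))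
      ((1 + r ^ 2) ^ (-(9 / 4 : ℝ)) * (-(r * (3 / 2 + r ^ 2 / 4)))) r := by
  have hu : (0 : ℝ) < 1 + r ^ 2 := by positivity
  have h2 : HasDerivAt (fun r : ℝ => (1 + r ^ 2) ^ (-(5 / 4 : ℝ)))
      (2 * r * (-(5 / 4 : ℝ)) * (1 + r ^ 2) ^ (-(5 / 4 : ℝ) - 1)) r :=
    (hasDerivAt_base r).rpow_const (Or.inl hu.ne')
  have h4 : HasDerivAt (fun r : ℝ => 1 + r ^ 2 / 2) r r := by
    have := ((hasDerivAt_pow 2 r).div_const 2).const_add (1 : ℝ)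
    simpa using this
  have h3 := h2.mul h4
  have key : (1 + r ^ 2) ^ (-(5 / 4 : ℝ)) = (1 + r ^ 2) ^ (-(9 / 4 : ℝ)) * (1 + r ^ 2) := by
    rw [show (-(5 / 4 : ℝ)) = -(9 / 4 : ℝ) + 1 by norm_num, Real.rpow_add hu, Real.rpow_one]
  have hexp : (-(5 / 4 : ℝ) - 1) = -(9 / 4 : ℝ) := by norm_num
  refine h3.congr_deriv ?_
  rw [hexp, key]
  ring

lemma hasDerivAt_h (α : ℝ) (r : ℝ) :
    HasDerivAt (h α) (2 * r * (-α) * (1 + r ^ 2) ^ (-α - 1)) r := by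
  have hu : (0 : ℝ) < 1 + r ^ 2 := by positivity
  exact (hasDerivAt_base r).rpow_const (Or.inl hu.ne')

theorem stmt_5 (α : ℝ) (hα : 0 < α) (p : ℕ) (hp : 2 ≤ p) :
    ∀ r : ℝ, 0 < r →
      0 < -(deriv (deriv f) r) / f r
            + (((p : ℝ) - 2) / (f r) ^ 2) * (1 - (deriv f r) ^ 2)
            - deriv f r * deriv (h α) r / (f r * h α r) := by
  intro r hr
  have hu : (0 : ℝ) < 1 + r ^ 2 := by positivity
  rw [deriv_f]
  have hddf : deriv (fun r : ℝ => (1 + r ^ 2) ^ (-(5 / 4 : ℝ)) * (1 + r ^ 2 / 2)) r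
      = (1 + r ^ 2) ^ (-(9 / 4 : ℝ)) * (-(r * (3 / 2 + r ^ 2 / 4))) := (hasDerivAt_df r).deriv
  have hdh : deriv (h α) r = 2 * r * (-α) * (1 + r ^ 2) ^ (-α - 1) := (hasDerivAt_h α r).deriv
  rw [hddf, hdh]
  set u : ℝ := 1 + r ^ 2 with hu_def
  have hf_pos : 0 < f r := by
    unfold f
    have := Real.rpow_pos_of_pos hu (-(1 / 4 : ℝ))
    positivity
  have hh_pos : 0 < h α r := Real.rpow_pos_of_pos hu (-α)
  -- term A
  have hA : 0 < -(u ^ (-(9 / 4 : ℝ)) * (-(r * (3 / 2 + r ^ 2 / 4)))) / f r := by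
    apply div_pos _ hf_pos
    have h1 := Real.rpow_pos_of_pos hu (-(9 / 4 : ℝ))
    have h2 : 0 < r * (3 / 2 + r ^ 2 / 4) := by positivity
    nlinarith
  -- term B
  have hdf_pos : 0 < u ^ (-(5 / 4 : ℝ)) * (1 + r ^ 2 / 2) := by
    have := Real.rpow_pos_of_pos hu (-(5 / 4 : ℝ))
    positivity
  have hB : 0 ≤ (((p : ℝ) - 2) / (f r) ^ 2) * (1 - (u ^ (-(5 / 4 : ℝ)) * (1 + r ^ 2 / 2)) ^ 2) := by
    apply mul_nonneg
    · apply div_nonneg _ (sq_nonneg _)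
      have : (2 : ℝ) ≤ (p : ℝ) := by exact_mod_cast hp
      linarith
    · have hsq : (u ^ (-(5 / 4 : ℝ))) ^ 2 = u ^ (-(5 / 2 : ℝ)) := by
        rw [← Real.rpow_natCast (u ^ (-(5 / 4 : ℝ))) 2, ← Real.rpow_mul hu.le]
        norm_num
      have hinv : u ^ (-(5 / 2 : ℝ)) = (u ^ (5 / 2 : ℝ))⁻¹ := by
        rw [← Real.rpow_neg hu.le]
      have hpos : 0 < u ^ (5 / 2 : ℝ) := Real.rpow_pos_of_pos hu _
      have e1 : (1 + r ^ 2 / 2) ^ 2 ≤ u ^ (2 : ℝ) := by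
        rw [Real.rpow_two]
        nlinarith [sq_nonneg r, sq_nonneg (r ^ 2)]
      have e2 : u ^ (2 : ℝ) ≤ u ^ (5 / 2 : ℝ) :=
        Real.rpow_le_rpow_of_exponent_le (by nlinarith [sq_nonneg r]) (by norm_num)
      have key : (1 + r ^ 2 / 2) ^ 2 ≤ u ^ (5 / 2 : ℝ) := e1.trans e2
      have : (u ^ (-(5 / 4 : ℝ)) * (1 + r ^ 2 / 2)) ^ 2 ≤ 1 := by
        rw [mul_pow, hsq, hinv, inv_mul_le_one₀ hpos]
        exact key
      linarith
  -- term C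
  have hC : (u ^ (-(5 / 4 : ℝ)) * (1 + r ^ 2 / 2)) * (2 * r * (-α) * u ^ (-α - 1))
      / (f r * h α r) < 0 := by
    apply div_neg_of_neg_of_pos _ (mul_pos hf_pos hh_pos)
    apply mul_neg_of_pos_of_neg hdf_pos
    have h1 := Real.rpow_pos_of_pos hu (-α - 1)
    nlinarith [mul_pos (mul_pos hr hα) h1]
  linarith
end

section
/- Let α > 0 and C₁ = 2 · 9^{-1/(2α)}. For every real b ≠ 0 and every sequence of positive integers l_i → ∞ and scales r_i → ∞ with lim r_i^{-1} d(γ^{l_i} p̃, p̃) = 1, if the distance estimate C l^{1/(1+2α)} - 2 ≤ d(γ^l p̃, p̃) ≤ 9 l^{1/(1+2α)} holds for all l ≥ 9^{1+1/(2α)}, then there exist constants C₁', C₂' > 0 depending only on α such that C₁'|b|^{1/(1+2α)} ≤ lim inf_i r_i^{-1} d(γ^{⌊b l_i⌋} p̃, p̃) ≤ lim sup_i r_i^{-1} d(γ^{⌊b l_i⌋} p̃, p̃) ≤ C₂'|b|^{1/(1+2α)}. -/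
open Filter

lemma dist_zpow_natAbs {N : Type*} [MetricSpace N] (γ : N ≃ᵢ N) (p : N) (m : ℤ) :
    dist ((γ ^ m) p) p = dist ((γ ^ (m.natAbs : ℤ)) p) p := by
  rcases le_or_gt 0 m with h | h
  · rw [Int.natAbs_of_nonneg h]
  · rw [Int.ofNat_natAbs_of_nonpos h.le]
    have hx : (γ ^ (-m)) ((γ ^ m) p) = p := by
      have h1 : (γ ^ (-m)) * (γ ^ m) = 1 := by
        rw [← zpow_add]; simp
      have h2 : (γ ^ (-m)) ((γ ^ m) p) = ((γ ^ (-m)) * (γ ^ m)) p := rfl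
      rw [h2, h1]; rfl
    calc dist ((γ ^ m) p) p
        = dist ((γ ^ (-m)) ((γ ^ m) p)) ((γ ^ (-m)) p) :=
          ((γ ^ (-m)).isometry.dist_eq _ _).symm
      _ = dist p ((γ ^ (-m)) p) := by rw [hx]
      _ = dist ((γ ^ (-m)) p) p := dist_comm _ _

set_option maxHeartbeats 1000000 in
theorem stmt_14 (α : ℝ) (hα : 0 < α) (N : Type*) [MetricSpace N]
    (γ : N ≃ᵢ N) (p : N)
    (hbounds : ∀ l : ℕ, (9 : ℝ) ^ (1 + 1 / (2 * α)) ≤ (l : ℝ) →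
      2 * (9 : ℝ) ^ (-(1 / (2 * α))) * (l : ℝ) ^ (1 / (1 + 2 * α)) - 2
          ≤ dist ((γ ^ (l : ℤ)) p) p ∧
        dist ((γ ^ (l : ℤ)) p) p ≤ 9 * (l : ℝ) ^ (1 / (1 + 2 * α)))
    (b : ℝ) (hb : b ≠ 0) (l : ℕ → ℕ) (r : ℕ → ℝ)
    (hl : Tendsto (fun i => (l i : ℝ)) atTop atTop)
    (hr : Tendsto r atTop atTop)
    (hlim : Tendsto (fun i => (r i)⁻¹ * dist ((γ ^ (l i : ℤ)) p) p) atTop (nhds 1)) :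
    ∃ C₁' C₂' : ℝ, 0 < C₁' ∧ 0 < C₂' ∧
      C₁' * |b| ^ (1 / (1 + 2 * α))
        ≤ liminf (fun i => (r i)⁻¹ * dist ((γ ^ ⌊b * (l i : ℝ)⌋) p) p) atTop ∧
      limsup (fun i => (r i)⁻¹ * dist ((γ ^ ⌊b * (l i : ℝ)⌋) p) p) atTop
        ≤ C₂' * |b| ^ (1 / (1 + 2 * α)) := by
  have h2α : (0:ℝ) < 1 + 2 * α := by linarith
  set β : ℝ := 1 / (1 + 2 * α) with hβdef
  have hβ : 0 < β := by positivity
  set c : ℝ := 2 * (9 : ℝ) ^ (-(1 / (2 * α))) with hcdef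
  have hc : 0 < c := by positivity
  set T : ℝ := (9 : ℝ) ^ (1 + 1 / (2 * α)) with hTdef
  have hT0 : 0 < T := by positivity
  have hT1 : (1:ℝ) ≤ T := by
    have h0 : (9:ℝ) ^ (0:ℝ) = 1 := Real.rpow_zero 9
    rw [hTdef, ← h0]
    exact Real.rpow_le_rpow_of_exponent_le (by norm_num) (by positivity)
  have hbpos : 0 < |b| := abs_pos.mpr hb
  set f : ℕ → ℝ := fun i => (r i)⁻¹ * dist ((γ ^ ⌊b * (l i : ℝ)⌋) p) p with hfdef
  set d : ℕ → ℝ := fun i => dist ((γ ^ (l i : ℤ)) p) p with hddef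
  set g : ℕ → ℝ := fun i =>
    9 / c * (|b| + ((l i : ℝ))⁻¹) ^ β * ((r i)⁻¹ * (d i + 2)) with hgdef
  set h : ℕ → ℝ := fun i =>
    c / 9 * (|b| - ((l i : ℝ))⁻¹) ^ β * ((r i)⁻¹ * d i) - 2 * (r i)⁻¹ with hhdef
  -- limits
  have hrinv : Tendsto (fun i => (r i)⁻¹) atTop (nhds 0) := hr.inv_tendsto_atTop
  have hlinv : Tendsto (fun i => ((l i : ℝ))⁻¹) atTop (nhds 0) := hl.inv_tendsto_atTop
  have hA : Tendsto (fun i => (|b| + ((l i : ℝ))⁻¹) ^ β) atTop (nhds (|b| ^ β)) := by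
    have : Tendsto (fun i => |b| + ((l i : ℝ))⁻¹) atTop (nhds (|b| + 0)) :=
      tendsto_const_nhds.add hlinv
    rw [add_zero] at this
    exact this.rpow_const (Or.inl hbpos.ne')
  have hA' : Tendsto (fun i => (|b| - ((l i : ℝ))⁻¹) ^ β) atTop (nhds (|b| ^ β)) := by
    have : Tendsto (fun i => |b| - ((l i : ℝ))⁻¹) atTop (nhds (|b| - 0)) :=
      tendsto_const_nhds.sub hlinv
    rw [sub_zero] at this
    exact this.rpow_const (Or.inl hbpos.ne')
  have hB : Tendsto (fun i => (r i)⁻¹ * (d i + 2)) atTop (nhds 1) := by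
    have h2 : Tendsto (fun i => (r i)⁻¹ * d i + (r i)⁻¹ * 2) atTop (nhds (1 + 0 * 2)) :=
      hlim.add (hrinv.mul_const 2)
    have : (fun i => (r i)⁻¹ * (d i + 2)) = fun i => (r i)⁻¹ * d i + (r i)⁻¹ * 2 := by
      funext i; ring
    rw [this]
    simpa using h2
  have hg : Tendsto g atTop (nhds (9 / c * |b| ^ β)) := by
    have h2 : 9 / c * |b| ^ β * 1 = 9 / c * |b| ^ β := mul_one _
    rw [hgdef, ← h2]
    exact ((tendsto_const_nhds (x := (9 / c : ℝ))).mul hA).mul hB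
  have hh : Tendsto h atTop (nhds (c / 9 * |b| ^ β)) := by
    have h2 : c / 9 * |b| ^ β * 1 - 2 * 0 = c / 9 * |b| ^ β := by ring
    rw [hhdef, ← h2]
    exact (((tendsto_const_nhds (x := (c / 9 : ℝ))).mul hA').mul hlim).sub
      (hrinv.const_mul 2)
  -- eventual bounds
  have hev : ∀ᶠ i in atTop, h i ≤ f i ∧ f i ≤ g i ∧ 0 ≤ f i := by
    filter_upwards [hr.eventually_gt_atTop 0, hl.eventually_ge_atTop T,
      hl.eventually_ge_atTop ((T + 2) / |b|)] with i hri hLT hLb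
    set L : ℝ := (l i : ℝ) with hLdef
    have hLpos : 0 < L := lt_of_lt_of_le hT0 hLT
    have habsL : T + 2 ≤ |b| * L := by
      rw [div_le_iff₀ hbpos] at hLb; linarith [hLb]
    set m : ℤ := ⌊b * L⌋ with hmdef
    set M : ℝ := (m.natAbs : ℝ) with hMdef
    have hMabs : M = |(m : ℝ)| := by
      rw [hMdef, Nat.cast_natAbs, Int.cast_abs]
    have hfl1 : (m : ℝ) ≤ b * L := Int.floor_le _
    have hfl2 : b * L - 1 ≤ (m : ℝ) := by
      have := Int.sub_one_lt_floor (b * L); push_cast at this ⊢; linarith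
    have habs : |(m : ℝ) - b * L| ≤ 1 := by
      rw [abs_le]; constructor <;> linarith
    have hbL : |b * L| = |b| * L := by
      rw [abs_mul, abs_of_nonneg hLpos.le]
    have hM1 : |b| * L - 1 ≤ M := by
      have := abs_abs_sub_abs_le_abs_sub ((m : ℝ)) (b * L)
      rw [hMabs]
      have h1 := (abs_le.mp (this.trans habs)).1
      rw [hbL] at h1; linarith
    have hM2 : M ≤ |b| * L + 1 := by
      have := abs_abs_sub_abs_le_abs_sub ((m : ℝ)) (b * L)
      rw [hMabs]
      have h1 := (abs_le.mp (this.trans habs)).2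
      rw [hbL] at h1; linarith
    have hMT : T ≤ M := by linarith
    have hM0 : 0 ≤ M := le_trans hT0.le hMT
    obtain ⟨hdm1, hdm2⟩ := hbounds m.natAbs hMT
    rw [← dist_zpow_natAbs γ p m] at hdm1 hdm2
    obtain ⟨hdl1, hdl2⟩ := hbounds (l i) hLT
    have hdi1 : c * L ^ β - 2 ≤ d i := hdl1
    have hdi2 : d i ≤ 9 * L ^ β := hdl2
    have hLβpos : 0 < L ^ β := Real.rpow_pos_of_pos hLpos _
    -- factorizations
    have hsplit1 : (|b| * L + 1) ^ β = (|b| + L⁻¹) ^ β * L ^ β := by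
      rw [← Real.mul_rpow (by positivity) hLpos.le]
      congr 1
      field_simp
    have hbl1pos : (0:ℝ) ≤ |b| * L - 1 := by linarith
    have hbinv : (0:ℝ) ≤ |b| - L⁻¹ := by
      rw [sub_nonneg, inv_le_iff_one_le_mul₀ hLpos]
      nlinarith [hT1]
    have hsplit2 : (|b| * L - 1) ^ β = (|b| - L⁻¹) ^ β * L ^ β := by
      rw [← Real.mul_rpow hbinv hLpos.le]
      congr 1
      field_simp
    refine ⟨?_, ?_, ?_⟩
    · -- lower bound  h i ≤ f i
      have s1 : (|b| * L - 1) ^ β ≤ M ^ β :=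
        Real.rpow_le_rpow hbl1pos hM1 hβ.le
      have s2 : d i / 9 ≤ L ^ β := by linarith
      have s3 : c * ((|b| - L⁻¹) ^ β * (d i / 9)) - 2 ≤ dist ((γ ^ m) p) p := by
        have e1 : (|b| - L⁻¹) ^ β * (d i / 9) ≤ (|b| - L⁻¹) ^ β * L ^ β :=
          mul_le_mul_of_nonneg_left s2 (Real.rpow_nonneg hbinv _)
        have e2 : (|b| - L⁻¹) ^ β * L ^ β ≤ M ^ β := by rw [← hsplit2]; exact s1
        have e3 := mul_le_mul_of_nonneg_left (e1.trans e2) hc.le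
        linarith [hdm1]
      have s4 : (r i)⁻¹ * (c * ((|b| - L⁻¹) ^ β * (d i / 9)) - 2)
          ≤ (r i)⁻¹ * dist ((γ ^ m) p) p :=
        mul_le_mul_of_nonneg_left s3 (inv_nonneg.mpr hri.le)
      calc h i = (r i)⁻¹ * (c * ((|b| - L⁻¹) ^ β * (d i / 9)) - 2) := by
            rw [hhdef]; ring
        _ ≤ f i := s4
    · -- upper bound f i ≤ g i
      have s1 : M ^ β ≤ (|b| * L + 1) ^ β :=
        Real.rpow_le_rpow hM0 hM2 hβ.le
      have s2 : L ^ β ≤ (d i + 2) / c := by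
        rw [le_div_iff₀ hc]; linarith
      have s3 : dist ((γ ^ m) p) p ≤ 9 * ((|b| + L⁻¹) ^ β * ((d i + 2) / c)) := by
        have e1 : (|b| + L⁻¹) ^ β * L ^ β ≤ (|b| + L⁻¹) ^ β * ((d i + 2) / c) :=
          mul_le_mul_of_nonneg_left s2 (Real.rpow_nonneg (by positivity) _)
        have e2 : M ^ β ≤ (|b| + L⁻¹) ^ β * L ^ β := by rw [← hsplit1]; exact s1
        have e3 := mul_le_mul_of_nonneg_left (e2.trans e1) (by norm_num : (0:ℝ) ≤ 9)
        linarith [hdm2]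
      have s4 : (r i)⁻¹ * dist ((γ ^ m) p) p
          ≤ (r i)⁻¹ * (9 * ((|b| + L⁻¹) ^ β * ((d i + 2) / c))) :=
        mul_le_mul_of_nonneg_left s3 (inv_nonneg.mpr hri.le)
      calc f i ≤ (r i)⁻¹ * (9 * ((|b| + L⁻¹) ^ β * ((d i + 2) / c))) := s4
        _ = g i := by
          show _ = 9 / c * (|b| + L⁻¹) ^ β * ((r i)⁻¹ * (d i + 2)); ring
    · exact mul_nonneg (inv_nonneg.mpr hri.le) dist_nonneg
  have hhf : ∀ᶠ i in atTop, h i ≤ f i := hev.mono fun i hi => hi.1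
  have hfg : ∀ᶠ i in atTop, f i ≤ g i := hev.mono fun i hi => hi.2.1
  have hf0 : ∀ᶠ i in atTop, (0:ℝ) ≤ f i := hev.mono fun i hi => hi.2.2
  have hfbdd : IsBoundedUnder (· ≤ ·) atTop f :=
    hg.isBoundedUnder_le.mono_le hfg
  refine ⟨c / 9, 9 / c, by positivity, by positivity, ?_, ?_⟩
  · have h1 : liminf h atTop ≤ liminf f atTop :=
      liminf_le_liminf hhf hh.isBoundedUnder_ge hfbdd.isCoboundedUnder_ge
    rw [hh.liminf_eq] at h1
    exact h1
  · have h1 : limsup f atTop ≤ limsup g atTop :=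
      limsup_le_limsup hfg (isCoboundedUnder_le_of_eventually_le atTop hf0)
        hg.isBoundedUnder_le
    rw [hg.limsup_eq] at h1
    exact h1
end

section
/- In the flat product cylinder W = [0, R] × S^1_r (circle of circumference 2πr with product metric), any closed rectifiable loop with winding number l ∈ ℤ around the S^1 factor that intersects both boundary components {a} × S^1_r and {a + d} × S^1_r (where [a, a+d] ⊆ [0,R]) has length at least 2[d^2 + l^2 π^2 r^2 · (2π)^{-2} · (2π)^2]^{1/2} = 2√(d² + l²π²r²). -/
open Real

lemma tri3 (a₁ a₂ a₃ b₁ b₂ b₃ : ℝ) :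
    Real.sqrt ((a₁+a₂+a₃)^2 + (b₁+b₂+b₃)^2) ≤
      Real.sqrt (a₁^2+b₁^2) + Real.sqrt (a₂^2+b₂^2) + Real.sqrt (a₃^2+b₃^2) := by
  have h : ∀ z : ℂ, ‖z‖ = Real.sqrt (z.re^2 + z.im^2) := by
    intro z
    rw [Complex.norm_def, Complex.normSq_apply]
    ring_nf
  have := norm_add₃_le (a := (⟨a₁,b₁⟩ : ℂ)) (b := ⟨a₂,b₂⟩) (c := ⟨a₃,b₃⟩)
  simpa [h, Complex.add_re, Complex.add_im] using this

lemma dist2 (p q : EuclideanSpace ℝ (Fin 2)) :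
    dist p q = Real.sqrt ((p 0 - q 0)^2 + (p 1 - q 1)^2) := by
  rw [EuclideanSpace.dist_eq, Fin.sum_univ_two, Real.dist_eq, Real.dist_eq,
    sq_abs, sq_abs]

/-- The cylinder projection lemma, stated via a continuous lift
`c : [0,1] → ℝ²` of a closed rectifiable loop in the flat cylinder
`[0, R] × S¹_r` (circle of circumference `2πr`): the endpoint condition
`c 1 1 = c 0 1 + l·(2πr)` encodes winding number `l`, the first coordinate
stays in `[0, R]`, and the loop touches both circles `{a} × S¹_r` and
`{a+d} × S¹_r`.  Its length (total variation, which equals the length of the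
loop in the cylinder) is at least `2√(d² + l²π²r²)`. -/
theorem stmt_17 (r R a d : ℝ) (hr : 0 < r) (ha : 0 ≤ a) (hd : 0 ≤ d)
    (hR : a + d ≤ R) (l : ℤ) (c : ℝ → EuclideanSpace ℝ (Fin 2))
    (hcont : ContinuousOn c (Set.Icc 0 1))
    (hclosed₀ : c 1 0 = c 0 0)
    (hwind : c 1 1 = c 0 1 + (l : ℝ) * (2 * π * r))
    (hin : ∀ t ∈ Set.Icc (0 : ℝ) 1, c t 0 ∈ Set.Icc 0 R)
    (htouch₁ : ∃ t₁ ∈ Set.Icc (0 : ℝ) 1, c t₁ 0 = a)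
    (htouch₂ : ∃ t₂ ∈ Set.Icc (0 : ℝ) 1, c t₂ 0 = a + d) :
    ENNReal.ofReal (2 * Real.sqrt (d ^ 2 + (l : ℝ) ^ 2 * π ^ 2 * r ^ 2))
      ≤ eVariationOn c (Set.Icc 0 1) := by
  obtain ⟨t₁, ht₁, hv₁⟩ := htouch₁
  obtain ⟨t₂, ht₂, hv₂⟩ := htouch₂
  set s := min t₁ t₂ with hs
  set t := max t₁ t₂ with ht
  have hst : s ≤ t := min_le_max
  have hsmem : s ∈ Set.Icc (0:ℝ) 1 := by
    rcases min_cases t₁ t₂ with ⟨h, _⟩ | ⟨h, _⟩ <;> rw [hs, h] <;> assumption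
  have htmem : t ∈ Set.Icc (0:ℝ) 1 := by
    rcases max_cases t₁ t₂ with ⟨h, _⟩ | ⟨h, _⟩ <;> rw [ht, h] <;> assumption
  have hdval : |c t 0 - c s 0| = d := by
    rcases le_total t₁ t₂ with h | h
    · rw [hs, ht, min_eq_left h, max_eq_right h, hv₁, hv₂]
      simp [abs_of_nonneg hd]
    · rw [hs, ht, min_eq_right h, max_eq_left h, hv₁, hv₂]
      rw [show a - (a + d) = -d by ring, abs_neg, abs_of_nonneg hd]
  -- the partition sequence
  set u : ℕ → ℝ := fun n => if n = 0 then 0 else if n = 1 then s else if n = 2 then t else 1 with hu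
  have humono : Monotone u := by
    intro i j hij
    have h0s : (0:ℝ) ≤ s := hsmem.1
    have ht1 : t ≤ 1 := htmem.2
    have h01 : (0:ℝ) ≤ 1 := zero_le_one
    simp only [hu]
    split_ifs <;> first | rfl | omega | linarith
  have key := eVariationOn.sum_le (f := c) (n := 3) humono
    (u := u) (fun i => by
      simp only [hu]
      split_ifs
      · exact Set.left_mem_Icc.2 zero_le_one
      · exact hsmem
      · exact htmem
      · exact Set.right_mem_Icc.2 zero_le_one)
  rw [Finset.sum_range_succ, Finset.sum_range_succ, Finset.sum_range_one] at key
  simp only [hu] at key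
  norm_num at key
  refine le_trans ?_ key
  rw [edist_dist, edist_dist, edist_dist, ← ENNReal.ofReal_add (dist_nonneg) (dist_nonneg),
    ← ENNReal.ofReal_add (by positivity) (dist_nonneg)]
  apply ENNReal.ofReal_le_ofReal
  rw [dist2, dist2, dist2]
  set x₀ := c 0 0; set x₁ := c (s:ℝ) 0; set x₂ := c t 0
  set y₀ := c 0 1; set y₁ := c (s:ℝ) 1; set y₂ := c t 1
  set L : ℝ := (l : ℝ) * (2 * π * r) with hL
  have hx3 : c 1 0 = x₀ := hclosed₀
  have hy3 : c 1 1 = y₀ + L := hwind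
  rw [hx3, hy3]
  have e1 : Real.sqrt ((x₁ - x₀)^2 + (y₁ - y₀)^2)
      = Real.sqrt (|x₁ - x₀|^2 + (y₁ - y₀)^2) := by rw [sq_abs]
  have e2 : Real.sqrt ((x₂ - x₁)^2 + (y₂ - y₁)^2)
      = Real.sqrt (|x₂ - x₁|^2 + (y₂ - y₁)^2) := by rw [sq_abs]
  have e3 : Real.sqrt ((x₀ - x₂)^2 + (y₀ + L - y₂)^2)
      = Real.sqrt (|x₀ - x₂|^2 + (y₀ + L - y₂)^2) := by rw [sq_abs]
  rw [e1, e2, e3]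
  have hsum : 2 * d ≤ |x₁ - x₀| + |x₂ - x₁| + |x₀ - x₂| := by
    have h1 : |x₁ - x₂| ≤ |x₁ - x₀| + |x₀ - x₂| := abs_sub_le _ _ _
    have h2 : |x₁ - x₂| = d := by rw [← hdval, abs_sub_comm]
    have h3 : |x₂ - x₁| = d := hdval
    linarith
  have hbs : (y₁ - y₀) + (y₂ - y₁) + (y₀ + L - y₂) = L := by ring
  have step1 : 2 * Real.sqrt (d ^ 2 + (l:ℝ) ^ 2 * π ^ 2 * r ^ 2)
      = Real.sqrt ((2*d)^2 + L^2) := by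
    rw [show (2*d)^2 + L^2 = 2^2 * (d ^ 2 + (l:ℝ) ^ 2 * π ^ 2 * r ^ 2) by rw [hL]; ring,
      Real.sqrt_mul (by positivity), Real.sqrt_sq (by norm_num)]
  rw [step1]
  have step2 : Real.sqrt ((2*d)^2 + L^2)
      ≤ Real.sqrt ((|x₁ - x₀| + |x₂ - x₁| + |x₀ - x₂|)^2
          + ((y₁ - y₀) + (y₂ - y₁) + (y₀ + L - y₂))^2) := by
    apply Real.sqrt_le_sqrt
    rw [hbs]
    have h2d : (0:ℝ) ≤ 2 * d := by linarith
    nlinarith [abs_nonneg (x₁ - x₀), abs_nonneg (x₂ - x₁), abs_nonneg (x₀ - x₂)]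
  calc Real.sqrt ((2*d)^2 + L^2) ≤ _ := step2
    _ ≤ _ := tri3 _ _ _ _ _ _
end
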